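/- Let Λ be a row-finite k-graph and {S_λ, S_{μ*}} a Cohn Λ-family in an R-algebra A. Then {S_λ, S_{μ*}} is a Kumjian-Pask Λ-family (i.e. ∏_{λ∈E}(S_v - S_λ S_{λ*}) = 0 for all v ∈ Λ⁰ and all finite exhaustive E ⊆ vΛ) if and only if ∏_{e∈E}(S_v - S_e S_{e*}) = 0 for all v ∈ Λ⁰ and all exhaustive sets E of edges E ⊆ vΛ¹. -/

import Mathlib

/-- A higher-rank graph (`k`-graph): a small category with a degree functor to `ℕ^k`
satisfying the factorisation property.  Paths and vertices live in one type `Path`;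
vertices are the paths of degree `0`. Composition is a total function which is only
meaningful on composable pairs. -/
structure KGraph (k : ℕ) where
  Path : Type
  src : Path → Path
  rng : Path → Path
  comp : Path → Path → Path
  deg : Path → Fin k → ℕ
  deg_src : ∀ a, deg (src a) = 0
  deg_rng : ∀ a, deg (rng a) = 0
  src_vertex : ∀ a, deg a = 0 → src a = a
  rng_vertex : ∀ a, deg a = 0 → rng a = a
  comp_assoc : ∀ a b c, src a = rng b → src b = rng c →
    comp (comp a b) c = comp a (comp b c)
  rng_comp : ∀ a b, src a = rng b → rng (comp a b) = rng a
  src_comp : ∀ a b, src a = rng b → src (comp a b) = src b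
  deg_comp : ∀ a b, src a = rng b → deg (comp a b) = deg a + deg b
  comp_rng_self : ∀ a, comp (rng a) a = a
  comp_src_self : ∀ a, comp a (src a) = a
  factor : ∀ a (m n : Fin k → ℕ), deg a = m + n →
    ∃! p : Path × Path, src p.1 = rng p.2 ∧ comp p.1 p.2 = a ∧
      deg p.1 = m ∧ deg p.2 = n

namespace KGraph

variable {k : ℕ}

/-- `v` is a vertex iff it has degree `0`. -/
def IsVertex (Λ : KGraph k) (v : Λ.Path) : Prop := Λ.deg v = 0

/-- The set `vΛ¹` of edges (paths of degree `e_i` for some `i`) with range `v`. -/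
def edgesAt (Λ : KGraph k) (v : Λ.Path) : Set Λ.Path :=
  {e | Λ.rng e = v ∧ ∃ i : Fin k, Λ.deg e = Pi.single i 1}

/-- `Λ` is row-finite: each vertex receives finitely many edges. -/
def RowFinite (Λ : KGraph k) : Prop := ∀ v, (Λ.edgesAt v).Finite

/-- `Λ` has no sources: `vΛ^m ≠ ∅` for every vertex `v` and every `m ∈ ℕ^k`. -/
def NoSources (Λ : KGraph k) : Prop :=
  ∀ v, Λ.IsVertex v → ∀ m : Fin k → ℕ, ∃ a, Λ.rng a = v ∧ Λ.deg a = m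

/-- `MCE(l, m)`: minimal common extensions of `l` and `m`. -/
def MCE (Λ : KGraph k) (l m : Λ.Path) : Set Λ.Path :=
  {t | Λ.deg t = Λ.deg l ⊔ Λ.deg m ∧
    (∃ ν, Λ.src l = Λ.rng ν ∧ Λ.comp l ν = t) ∧
    (∃ γ, Λ.src m = Λ.rng γ ∧ Λ.comp m γ = t)}

/-- `Λ^min(l, m)`: pairs `(ν, γ)` with `lν = mγ ∈ MCE(l, m)`. -/
def MinPairs (Λ : KGraph k) (l m : Λ.Path) : Set (Λ.Path × Λ.Path) :=
  {p | Λ.src l = Λ.rng p.1 ∧ Λ.src m = Λ.rng p.2 ∧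
    Λ.comp l p.1 = Λ.comp m p.2 ∧ Λ.comp l p.1 ∈ Λ.MCE l m}

/-- `E ⊆ vΛ` is exhaustive if every path with range `v` has a common extension with
some member of `E`. -/
def IsExhaustive (Λ : KGraph k) (v : Λ.Path) (E : Set Λ.Path) : Prop :=
  ∀ a, Λ.rng a = v → ∃ μ ∈ E, (Λ.MinPairs a μ).Nonempty

end KGraph

/-- A Cohn `Λ`-family in a ring `A` : relations (CP1)–(CP3). -/
structure IsCohnFamily {k : ℕ} (Λ : KGraph k) (A : Type) [Ring A]
    (T Ts : Λ.Path → A) : Prop where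
  ghost_vertex : ∀ v, Λ.IsVertex v → Ts v = T v
  vertex_idem : ∀ v, Λ.IsVertex v → T v * T v = T v
  vertex_orth : ∀ v w, Λ.IsVertex v → Λ.IsVertex w → v ≠ w → T v * T w = 0
  mul_comp : ∀ a b, Λ.src a = Λ.rng b → T a * T b = T (Λ.comp a b)
  ghost_mul_comp : ∀ a b, Λ.src a = Λ.rng b → Ts b * Ts a = Ts (Λ.comp a b)
  cp3 : ∀ a b, Ts a * T b = ∑ᶠ p ∈ Λ.MinPairs a b, T p.1 * Ts p.2

/-- Product of the images of the elements of a finset, in some fixed enumeration.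
(The products we take are over pairwise-commuting factors, so the order is immaterial.) -/
noncomputable def listProd {A : Type} [Monoid A] {ι : Type} (s : Finset ι) (f : ι → A) : A :=
  (s.toList.map f).prod

/-- `F_{T,v} := T_v - ∏_{e ∈ vΛ¹} (T_v - T_e T_{e*})`. -/
noncomputable def FF {k : ℕ} (Λ : KGraph k) (hrf : Λ.RowFinite) {A : Type} [Ring A]
    (T Ts : Λ.Path → A) (v : Λ.Path) : A :=
  T v - listProd (hrf v).toFinset (fun e => T v - T e * Ts e)

namespace KGraph

variable {k : ℕ} (Λ : KGraph k)

lemma rng_of_vertex {v : Λ.Path} (hv : Λ.IsVertex v) : Λ.rng v = v := Λ.rng_vertex v hv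

lemma eq_of_vertex_rng {a v : Λ.Path} (ha : Λ.deg a = 0) (h : Λ.rng a = v) : a = v := by
  rw [← h, Λ.rng_vertex a ha]

lemma comp_inj {a b c d : Λ.Path} (h1 : Λ.src a = Λ.rng b) (h2 : Λ.src c = Λ.rng d)
    (hdeg : Λ.deg a = Λ.deg c) (h : Λ.comp a b = Λ.comp c d) : a = c ∧ b = d := by
  have hdb : Λ.deg b = Λ.deg d := by
    have e1 := Λ.deg_comp a b h1
    have e2 := Λ.deg_comp c d h2
    rw [h, e2, hdeg] at e1
    exact (add_left_cancel e1).symm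
  obtain ⟨p, hp, hun⟩ := Λ.factor (Λ.comp a b) (Λ.deg a) (Λ.deg b) (Λ.deg_comp a b h1)
  have ha := hun (a, b) ⟨h1, rfl, rfl, rfl⟩
  have hc := hun (c, d) ⟨h2, h.symm, hdeg.symm, hdb.symm⟩
  have hme := ha.trans hc.symm
  exact ⟨congrArg Prod.fst hme, congrArg Prod.snd hme⟩

lemma comp_left_cancel {a x y : Λ.Path} (h1 : Λ.src a = Λ.rng x) (h2 : Λ.src a = Λ.rng y)
    (h : Λ.comp a x = Λ.comp a y) : x = y :=
  (Λ.comp_inj h1 h2 rfl h).2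

/-- `vΛ^m`. -/
def pathsAt (v : Λ.Path) (m : Fin k → ℕ) : Set Λ.Path :=
  {a | Λ.rng a = v ∧ Λ.deg a = m}

lemma pathsAt_finite (hrf : Λ.RowFinite) :
    ∀ (n : ℕ) (v : Λ.Path) (m : Fin k → ℕ), (∑ i, m i) = n → (Λ.pathsAt v m).Finite := by
  intro n
  induction n using Nat.strong_induction_on with
  | _ n ih =>
    intro v m hm
    by_cases h0 : m = 0
    · subst h0
      refine Set.Finite.subset (Set.finite_singleton v) ?_
      rintro a ⟨hr, hd⟩
      exact Λ.eq_of_vertex_rng hd hr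
    · have hex : ∃ i, 1 ≤ m i := by
        by_contra hc
        push_neg at hc
        exact h0 (funext fun i => by have := hc i; simp only [Pi.zero_apply]; omega)
      obtain ⟨i, hi⟩ := hex
      have hsplit : m = Pi.single i 1 + (m - Pi.single i 1) := by
        funext j
        by_cases hj : j = i
        · subst hj; simp [Pi.single_apply]; omega
        · simp [Pi.single_apply, hj]
      have hsub : Λ.pathsAt v m ⊆
          ⋃ e ∈ Λ.edgesAt v, (Λ.comp e '' Λ.pathsAt (Λ.src e) (m - Pi.single i 1)) := by
        rintro a ⟨hr, hd⟩
        obtain ⟨⟨e, a'⟩, ⟨hse, hca, hde, hda⟩, -⟩ :=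
          Λ.factor a (Pi.single i 1) (m - Pi.single i 1) (by rw [hd]; exact hsplit)
        exact Set.mem_biUnion (x := e)
          ⟨by rw [← hr, ← hca, Λ.rng_comp _ _ hse], i, hde⟩ ⟨a', ⟨hse.symm, hda⟩, hca⟩
      refine Set.Finite.subset (Set.Finite.biUnion (hrf v) fun e _ => Set.Finite.image _ ?_) hsub
      refine ih _ ?_ _ _ rfl
      rw [← hm]
      refine Finset.sum_lt_sum (fun j _ => ?_) ⟨i, Finset.mem_univ i, ?_⟩
      · simp [Pi.single_apply]
      · simp [Pi.single_apply]; omega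

lemma minPairs_finite (hrf : Λ.RowFinite) (a b : Λ.Path) : (Λ.MinPairs a b).Finite := by
  have h1 : ((fun p : Λ.Path × Λ.Path => Λ.comp a p.1) '' Λ.MinPairs a b).Finite := by
    refine Set.Finite.subset (Λ.pathsAt_finite hrf _ (Λ.rng a) (Λ.deg a ⊔ Λ.deg b) rfl) ?_
    rintro t ⟨p, hp, rfl⟩
    exact ⟨Λ.rng_comp _ _ hp.1, hp.2.2.2.1⟩
  refine Set.Finite.of_finite_image h1 ?_
  rintro p hp q hq (h : Λ.comp a p.1 = Λ.comp a q.1)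
  have h1' := (Λ.comp_inj hp.1 hq.1 rfl h).2
  have h2 : Λ.comp b p.2 = Λ.comp b q.2 := by rw [← hp.2.2.1, ← hq.2.2.1, h]
  have h2' := (Λ.comp_inj hp.2.1 hq.2.1 rfl h2).2
  exact Prod.ext h1' h2'

lemma mem_minPairs_symm {a b : Λ.Path} {p : Λ.Path × Λ.Path} (hp : p ∈ Λ.MinPairs a b) :
    p.swap ∈ Λ.MinPairs b a := by
  obtain ⟨hp1, hp2, hpe, hdeg, hx, hy⟩ := hp
  simp only [KGraph.MinPairs, Set.mem_setOf_eq, Prod.fst_swap, Prod.snd_swap]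
  refine ⟨hp2, hp1, hpe.symm, ?_, ⟨p.2, hp2, rfl⟩, ⟨p.1, hp1, hpe⟩⟩
  rw [← hpe, hdeg, sup_comm]

lemma minPairs_self (a : Λ.Path) : Λ.MinPairs a a = {(Λ.src a, Λ.src a)} := by
  have hsv : Λ.rng (Λ.src a) = Λ.src a := Λ.rng_vertex _ (Λ.deg_src a)
  ext p
  constructor
  · rintro ⟨hp1, hp2, hpe, hdeg, -⟩
    have hd1 : Λ.deg p.1 = 0 := by
      have e1 := Λ.deg_comp a p.1 hp1
      rw [hdeg, sup_idem] at e1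
      have := (add_left_cancel (a := Λ.deg a) (by rw [← e1, add_zero] : Λ.deg a + 0 = Λ.deg a + Λ.deg p.1))
      exact this.symm
    have hd2 : Λ.deg p.2 = 0 := by
      have e1 := Λ.deg_comp a p.2 hp2
      rw [← hpe, hdeg, sup_idem] at e1
      have := (add_left_cancel (a := Λ.deg a) (by rw [← e1, add_zero] : Λ.deg a + 0 = Λ.deg a + Λ.deg p.2))
      exact this.symm
    have hp1' : p.1 = Λ.src a := Λ.eq_of_vertex_rng hd1 hp1.symm
    have hp2' : p.2 = Λ.src a := Λ.eq_of_vertex_rng hd2 hp2.symm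
    simp [Prod.ext_iff, hp1', hp2']
  · intro hp
    rw [Set.mem_singleton_iff] at hp
    subst hp
    refine ⟨hsv.symm, hsv.symm, rfl, ?_, ⟨Λ.src a, hsv.symm, rfl⟩, ⟨Λ.src a, hsv.symm, rfl⟩⟩
    rw [Λ.comp_src_self, sup_idem]

lemma minPairs_empty_of_same_deg {a b : Λ.Path} (hd : Λ.deg a = Λ.deg b) (hne : a ≠ b) :
    Λ.MinPairs a b = ∅ := by
  ext p
  simp only [Set.mem_empty_iff_false, iff_false]
  rintro ⟨hp1, hp2, hpe, hdeg, -⟩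
  have hd1 : Λ.deg p.1 = 0 := by
    have e1 := Λ.deg_comp a p.1 hp1
    rw [hdeg, hd, sup_idem, ← hd] at e1
    exact (add_left_cancel (a := Λ.deg a) (by rw [← e1, add_zero])).symm
  have hd2 : Λ.deg p.2 = 0 := by
    have e1 := Λ.deg_comp b p.2 hp2
    rw [← hpe, hdeg, hd, sup_idem] at e1
    exact (add_left_cancel (a := Λ.deg b) (by rw [← e1, add_zero])).symm
  apply hne
  have h1 : Λ.comp a p.1 = a := by
    rw [Λ.eq_of_vertex_rng hd1 hp1.symm, Λ.comp_src_self]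
  have h2 : Λ.comp b p.2 = b := by
    rw [Λ.eq_of_vertex_rng hd2 hp2.symm, Λ.comp_src_self]
  rw [← h1, hpe, h2]

lemma exists_minPair_of_common {a x b y : Λ.Path} (h1 : Λ.src a = Λ.rng x)
    (h2 : Λ.src b = Λ.rng y) (h : Λ.comp a x = Λ.comp b y) :
    ∃ ν γ t2, (ν, γ) ∈ Λ.MinPairs a b ∧ Λ.src ν = Λ.rng t2 ∧ x = Λ.comp ν t2 := by
  have dt : Λ.deg (Λ.comp a x) = Λ.deg a + Λ.deg x := Λ.deg_comp a x h1
  have dt' : Λ.deg (Λ.comp a x) = Λ.deg b + Λ.deg y := by rw [h]; exact Λ.deg_comp b y h2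
  have hfac : Λ.deg (Λ.comp a x) = (Λ.deg a ⊔ Λ.deg b) +
      (Λ.deg (Λ.comp a x) - (Λ.deg a ⊔ Λ.deg b)) := by
    funext j
    have j1 := congrFun dt j
    have j2 := congrFun dt' j
    simp only [Pi.add_apply, Pi.sup_apply, Pi.sub_apply] at *
    omega
  obtain ⟨⟨t1, t2⟩, ⟨h12, hct, hd1, hd2⟩, -⟩ :=
    Λ.factor (Λ.comp a x) (Λ.deg a ⊔ Λ.deg b) (Λ.deg (Λ.comp a x) - (Λ.deg a ⊔ Λ.deg b)) hfac
  have hfac2 : Λ.deg t1 = Λ.deg a + ((Λ.deg a ⊔ Λ.deg b) - Λ.deg a) := by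
    funext j
    have := congrFun hd1 j
    simp only [Pi.add_apply, Pi.sup_apply, Pi.sub_apply] at *
    omega
  obtain ⟨⟨a1, ν⟩, ⟨hsa1, hca1, hda1, hdν⟩, -⟩ :=
    Λ.factor t1 (Λ.deg a) ((Λ.deg a ⊔ Λ.deg b) - Λ.deg a) hfac2
  have hfac3 : Λ.deg t1 = Λ.deg b + ((Λ.deg a ⊔ Λ.deg b) - Λ.deg b) := by
    funext j
    have := congrFun hd1 j
    simp only [Pi.add_apply, Pi.sup_apply, Pi.sub_apply] at *
    omega
  obtain ⟨⟨b1, γ⟩, ⟨hsb1, hcb1, hdb1, hdγ⟩, -⟩ :=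
    Λ.factor t1 (Λ.deg b) ((Λ.deg a ⊔ Λ.deg b) - Λ.deg b) hfac3
  -- src ν = rng t2 and src γ = rng t2
  have hsν : Λ.src ν = Λ.rng t2 := by
    rw [← Λ.src_comp a1 ν hsa1, hca1]; exact h12
  have hsγ : Λ.src γ = Λ.rng t2 := by
    rw [← Λ.src_comp b1 γ hsb1, hcb1]; exact h12
  -- a = a1, x = comp ν t2
  have hta : Λ.comp a x = Λ.comp a1 (Λ.comp ν t2) := by
    rw [← Λ.comp_assoc a1 ν t2 hsa1 hsν, hca1, hct]
  have haa1 : a = a1 ∧ x = Λ.comp ν t2 :=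
    Λ.comp_inj h1 (by rw [Λ.rng_comp ν t2 hsν]; exact hsa1) hda1.symm hta
  have htb : Λ.comp b y = Λ.comp b1 (Λ.comp γ t2) := by
    rw [← Λ.comp_assoc b1 γ t2 hsb1 hsγ, hcb1, hct, h]
  have hbb1 : b = b1 ∧ y = Λ.comp γ t2 :=
    Λ.comp_inj h2 (by rw [Λ.rng_comp γ t2 hsγ]; exact hsb1) hdb1.symm htb
  have hcaν : Λ.comp a ν = t1 := by rw [haa1.1]; exact hca1
  have hcbγ : Λ.comp b γ = t1 := by rw [hbb1.1]; exact hcb1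
  refine ⟨ν, γ, t2, ⟨?_, ?_, ?_, ?_, ⟨ν, ?_, ?_⟩, ⟨γ, ?_, ?_⟩⟩, hsν, haa1.2⟩
  · rw [haa1.1]; exact hsa1
  · rw [hbb1.1]; exact hsb1
  · rw [hcaν, hcbγ]
  · rw [hcaν]; exact hd1
  · rw [haa1.1]; exact hsa1
  · rfl
  · rw [hbb1.1]; exact hsb1
  · rw [hcbγ, hcaν]

lemma minPairs_nonempty_of_common {a x b y : Λ.Path} (h1 : Λ.src a = Λ.rng x)
    (h2 : Λ.src b = Λ.rng y) (h : Λ.comp a x = Λ.comp b y) :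
    (Λ.MinPairs a b).Nonempty := by
  obtain ⟨ν, γ, t2, hm, -, -⟩ := Λ.exists_minPair_of_common h1 h2 h
  exact ⟨(ν, γ), hm⟩

end KGraph
section ListProdLemmas

variable {A : Type} [Monoid A] {ι : Type}

lemma listProd_empty (f : ι → A) : listProd (∅ : Finset ι) f = 1 := by
  simp [listProd]

lemma listProd_singleton (a : ι) (f : ι → A) : listProd ({a} : Finset ι) f = f a := by
  simp [listProd]

lemma listProd_insert [DecidableEq ι] {s : Finset ι} {a : ι} (ha : a ∉ s) (f : ι → A)
    (comm : ∀ x ∈ insert a s, ∀ y ∈ insert a s, Commute (f x) (f y)) :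
    listProd (insert a s) f = f a * listProd s f := by
  have hperm : ((insert a s).toList.map f).Perm (f a :: s.toList.map f) := by
    simpa using (Finset.toList_insert ha).map f
  have hpw : ((insert a s).toList.map f).Pairwise Commute := by
    rw [List.pairwise_map]
    refine List.pairwise_of_forall_mem_list fun x hx y hy => ?_
    exact comm x (Finset.mem_toList.1 hx) y (Finset.mem_toList.1 hy)
  rw [listProd, hperm.prod_eq' hpw, List.prod_cons]
  rfl

lemma commute_listProd {g : ι → A} {x : A} (s : Finset ι) (h : ∀ a ∈ s, Commute x (g a)) :
    Commute x (listProd s g) := by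
  refine Commute.list_prod_right _ _ fun y hy => ?_
  obtain ⟨a, ha, rfl⟩ := List.mem_map.1 hy
  exact h a (Finset.mem_toList.1 ha)

lemma mul_listProd_self [DecidableEq ι] {g : ι → A} {t : Finset ι} {a : ι} (ha : a ∈ t)
    (hcomm : ∀ x ∈ t, ∀ y ∈ t, Commute (g x) (g y)) (hidem : g a * g a = g a) :
    g a * listProd t g = listProd t g := by
  have he : t = insert a (t.erase a) := (Finset.insert_erase ha).symm
  rw [he, listProd_insert (Finset.notMem_erase a t) g (by rw [← he]; exact hcomm),
    ← mul_assoc, hidem]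

lemma listProd_union [DecidableEq ι] {U : Finset ι} {g : ι → A}
    (hcomm : ∀ a ∈ U, ∀ b ∈ U, Commute (g a) (g b)) (hidem : ∀ a ∈ U, g a * g a = g a) :
    ∀ s t : Finset ι, s ⊆ U → t ⊆ U → listProd (s ∪ t) g = listProd s g * listProd t g := by
  intro s
  induction s using Finset.induction_on with
  | empty => intro t _ _; rw [Finset.empty_union, listProd_empty, one_mul]
  | insert a s ha ih =>
    intro t hsU htU
    have haU : a ∈ U := hsU (Finset.mem_insert_self a s)
    have hsU' : s ⊆ U := fun x hx => hsU (Finset.mem_insert_of_mem hx)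
    have hcomm' : ∀ x ∈ insert a s, ∀ y ∈ insert a s, Commute (g x) (g y) := fun x hx y hy =>
      hcomm x (hsU hx) y (hsU hy)
    by_cases hat : a ∈ t
    · have hunion : insert a s ∪ t = s ∪ t := by
        rw [Finset.insert_union, Finset.insert_eq_self.2 (Finset.mem_union_right s hat)]
      have hPsb : ∀ b ∈ t, Commute (listProd s g) (g b) := fun b hb =>
        (commute_listProd s fun x hx => hcomm b (htU hb) x (hsU' hx)).symm
      have hst : Commute (listProd s g) (listProd t g) := commute_listProd t hPsb
      have hat' : g a * listProd t g = listProd t g :=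
        mul_listProd_self hat (fun x hx y hy => hcomm x (htU hx) y (htU hy)) (hidem a haU)
      rw [hunion, ih t hsU' htU, listProd_insert ha g hcomm', mul_assoc]
      symm
      rw [hst.eq, ← mul_assoc, hat']
    · have hnot : a ∉ s ∪ t := by
        simp only [Finset.mem_union]
        rintro (h | h)
        exacts [ha h, hat h]
      have hunion : insert a s ∪ t = insert a (s ∪ t) := Finset.insert_union a s t
      have hins : ∀ x ∈ insert a (s ∪ t), x ∈ U := by
        intro x hx
        rcases Finset.mem_insert.1 hx with h | h
        · exact h ▸ haU
        · rcases Finset.mem_union.1 h with h' | h'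
          exacts [hsU' h', htU h']
      rw [hunion, listProd_insert hnot g (fun x hx y hy => hcomm x (hins x hx) y (hins y hy)),
        ih t hsU' htU, listProd_insert ha g hcomm', mul_assoc]

lemma listProd_biUnion [DecidableEq ι] {κ : Type} [DecidableEq κ] {U : Finset ι} {g : ι → A}
    (hcomm : ∀ a ∈ U, ∀ b ∈ U, Commute (g a) (g b)) (hidem : ∀ a ∈ U, g a * g a = g a) :
    ∀ (E : Finset κ) (t : κ → Finset ι), (∀ l ∈ E, t l ⊆ U) →
      listProd E (fun l => listProd (t l) g) = listProd (E.biUnion t) g := by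
  intro E
  induction E using Finset.induction_on with
  | empty => intro t _; rw [Finset.biUnion_empty, listProd_empty, listProd_empty]
  | insert a E ha ih =>
    intro t htU
    have hcommP : ∀ x ∈ insert a E, ∀ y ∈ insert a E,
        Commute (listProd (t x) g) (listProd (t y) g) := by
      intro x hx y hy
      exact commute_listProd _ fun c hc =>
        (commute_listProd _ fun b hb => hcomm c (htU y hy hc) b (htU x hx hb)).symm
    rw [listProd_insert ha _ hcommP, ih t fun l hl => htU l (Finset.mem_insert_of_mem hl),
      Finset.biUnion_insert,
      listProd_union hcomm hidem (t a) (E.biUnion t) (htU a (Finset.mem_insert_self a E))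
        (fun x hx => by
          obtain ⟨l, hl, hxl⟩ := Finset.mem_biUnion.1 hx
          exact htU l (Finset.mem_insert_of_mem hl) hxl)]

lemma list_mul_absorb (x : A) : ∀ l : List A, (∀ a ∈ l, x * a = x) → x * l.prod = x := by
  intro l
  induction l with
  | nil => simp
  | cons a t ih =>
    intro h
    rw [List.prod_cons, ← mul_assoc, h a (List.mem_cons_self)]
    exact ih fun b hb => h b (List.mem_cons_of_mem a hb)

lemma mul_listProd_absorb {x : A} {s : Finset ι} {f : ι → A} (h : ∀ a ∈ s, x * f a = x) :
    x * listProd s f = x := by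
  refine list_mul_absorb x _ fun a ha => ?_
  obtain ⟨b, hb, rfl⟩ := List.mem_map.1 ha
  exact h b (Finset.mem_toList.1 hb)

lemma list_prod_mul_right (x : A) : ∀ l : List A, l ≠ [] → (∀ a ∈ l, a * x = a) →
    l.prod * x = l.prod := by
  intro l
  induction l with
  | nil => intro h; exact absurd rfl h
  | cons a t ih =>
    intro _ h
    cases t with
    | nil => simpa using h a (by simp)
    | cons b m =>
      rw [List.prod_cons, mul_assoc, ih (by simp) fun c hc => h c (List.mem_cons_of_mem _ hc)]

lemma listProd_mul_right {x : A} {s : Finset ι} {f : ι → A} (hs : s.Nonempty)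
    (h : ∀ a ∈ s, f a * x = f a) : listProd s f * x = listProd s f := by
  refine list_prod_mul_right x _ ?_ fun a ha => ?_
  · simp only [ne_eq, List.map_eq_nil_iff, Finset.toList_eq_nil]
    exact fun he => by simp [he] at hs
  · obtain ⟨b, hb, rfl⟩ := List.mem_map.1 ha
    exact h b (Finset.mem_toList.1 hb)

lemma list_transfer (x : A) : ∀ (l : List ι) (f g : ι → A), (∀ a ∈ l, f a * x = x * g a) →
    (l.map f).prod * x = x * (l.map g).prod := by
  intro l
  induction l with
  | nil => simp
  | cons a t ih =>
    intro f g h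
    rw [List.map_cons, List.map_cons, List.prod_cons, List.prod_cons, mul_assoc,
      ih f g fun b hb => h b (List.mem_cons_of_mem a hb), ← mul_assoc,
      h a (List.mem_cons_self), mul_assoc]

lemma listProd_transfer {x : A} {s : Finset ι} {f g : ι → A}
    (h : ∀ a ∈ s, f a * x = x * g a) : listProd s f * x = x * listProd s g := by
  refine list_transfer x _ f g fun a ha => h a (Finset.mem_toList.1 ha)

lemma list_pull_idem (w : A) : ∀ (l : List ι) (R R' : ι → A), l ≠ [] →
    (∀ a ∈ l, R a * w = R a ∧ R a = w * R' a) →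
    (l.map R).prod = w * (l.map R').prod := by
  intro l
  induction l with
  | nil => intro _ _ h; exact absurd rfl h
  | cons a t ih =>
    intro R R' _ h
    cases t with
    | nil => simpa using (h a (by simp)).2
    | cons b m =>
      rw [List.map_cons, List.prod_cons, ih R R' (by simp)
        (fun c hc => h c (List.mem_cons_of_mem _ hc)), ← mul_assoc, (h a (by simp)).1,
        (h a (by simp)).2]
      simp only [List.map_cons, List.prod_cons, mul_assoc]

end ListProdLemmas

section OrthSum

variable {A : Type} [Ring A] {ι : Type}

lemma listProd_eq_zero {s : Finset ι} {f : ι → A} {a : ι} (ha : a ∈ s) (h : f a = 0) :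
    listProd s f = 0 :=
  List.prod_eq_zero (List.mem_map.2 ⟨a, Finset.mem_toList.2 ha, h⟩)

lemma listProd_sub_sum [DecidableEq ι] {p : A} {q : ι → A} :
    ∀ {s : Finset ι}, s.Nonempty →
    (p * p = p) → (∀ a ∈ s, p * q a = q a) → (∀ a ∈ s, q a * p = q a) →
    (∀ a ∈ s, ∀ b ∈ s, a ≠ b → q a * q b = 0) →
    listProd s (fun a => p - q a) = p - ∑ a ∈ s, q a := by
  intro s
  induction s using Finset.induction_on with
  | empty => intro h; exact absurd h (by simp)
  | insert a s ha ih =>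
    intro _ hp h1 h2 horth
    have hcomm : ∀ x ∈ insert a s, ∀ y ∈ insert a s,
        Commute (p - q x) (p - q y) := by
      intro x hx y hy
      by_cases hxy : x = y
      · subst hxy; exact Commute.refl _
      · show (p - q x) * (p - q y) = (p - q y) * (p - q x)
        rw [sub_mul, sub_mul, mul_sub, mul_sub, mul_sub, mul_sub, hp, h1 x hx, h1 y hy,
          h2 x hx, h2 y hy, horth x hx y hy hxy, horth y hy x hx (Ne.symm hxy)]
        abel
    rcases Finset.eq_empty_or_nonempty s with rfl | hsne
    · have he : insert a (∅ : Finset ι) = {a} := by simp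
      rw [he, listProd_singleton, Finset.sum_singleton]
    · rw [listProd_insert ha _ hcomm,
        ih hsne hp (fun x hx => h1 x (Finset.mem_insert_of_mem hx))
          (fun x hx => h2 x (Finset.mem_insert_of_mem hx))
          (fun x hx y hy => horth x (Finset.mem_insert_of_mem hx) y (Finset.mem_insert_of_mem hy)),
        Finset.sum_insert ha, sub_mul, mul_sub, mul_sub, hp,
        h2 a (Finset.mem_insert_self a s)]
      have hqsum : q a * ∑ x ∈ s, q x = 0 := by
        rw [Finset.mul_sum]
        refine Finset.sum_eq_zero fun x hx => ?_
        exact horth a (Finset.mem_insert_self a s) x (Finset.mem_insert_of_mem hx)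
          (fun he => ha (he ▸ hx))
      have hpsum : p * ∑ x ∈ s, q x = ∑ x ∈ s, q x := by
        rw [Finset.mul_sum]
        refine Finset.sum_congr rfl fun x hx => h1 x (Finset.mem_insert_of_mem hx)
      rw [hqsum, hpsum]
      abel

end OrthSum
section CohnLemmas

variable {k : ℕ} {Λ : KGraph k} {A : Type} [Ring A] {S Ss : Λ.Path → A}

lemma cohn_rng_mul (hS : IsCohnFamily Λ A S Ss) (a : Λ.Path) : S (Λ.rng a) * S a = S a := by
  have h : Λ.src (Λ.rng a) = Λ.rng a := Λ.src_vertex _ (Λ.deg_rng a)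
  rw [hS.mul_comp _ _ h, Λ.comp_rng_self]

lemma cohn_mul_src (hS : IsCohnFamily Λ A S Ss) (a : Λ.Path) : S a * S (Λ.src a) = S a := by
  have h : Λ.src a = Λ.rng (Λ.src a) := (Λ.rng_vertex _ (Λ.deg_src a)).symm
  rw [hS.mul_comp _ _ h, Λ.comp_src_self]

lemma cohn_Ss_rng (hS : IsCohnFamily Λ A S Ss) (a : Λ.Path) : Ss a * S (Λ.rng a) = Ss a := by
  have h : Λ.src (Λ.rng a) = Λ.rng a := Λ.src_vertex _ (Λ.deg_rng a)
  rw [← hS.ghost_vertex _ (Λ.deg_rng a), hS.ghost_mul_comp _ _ h, Λ.comp_rng_self]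

lemma cohn_src_Ss (hS : IsCohnFamily Λ A S Ss) (a : Λ.Path) : S (Λ.src a) * Ss a = Ss a := by
  have h : Λ.src a = Λ.rng (Λ.src a) := (Λ.rng_vertex _ (Λ.deg_src a)).symm
  rw [← hS.ghost_vertex _ (Λ.deg_src a), hS.ghost_mul_comp _ _ h, Λ.comp_src_self]

lemma cohn_Ss_S (hS : IsCohnFamily Λ A S Ss) (a : Λ.Path) : Ss a * S a = S (Λ.src a) := by
  rw [hS.cp3 a a, Λ.minPairs_self, finsum_mem_singleton]
  rw [hS.ghost_vertex _ (Λ.deg_src a), hS.vertex_idem _ (Λ.deg_src a)]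

lemma cohn_P_idem (hS : IsCohnFamily Λ A S Ss) (a : Λ.Path) :
    (S a * Ss a) * (S a * Ss a) = S a * Ss a := by
  rw [mul_assoc, ← mul_assoc (Ss a), cohn_Ss_S hS, cohn_src_Ss hS]

lemma cohn_cp3' (hrf : Λ.RowFinite) (hS : IsCohnFamily Λ A S Ss) (a b : Λ.Path) :
    Ss a * S b = ∑ p ∈ (Λ.minPairs_finite hrf a b).toFinset, S p.1 * Ss p.2 := by
  rw [hS.cp3, ← finsum_mem_coe_finset, Set.Finite.coe_toFinset]

lemma cohn_P_mul (hrf : Λ.RowFinite) (hS : IsCohnFamily Λ A S Ss) (a b : Λ.Path) :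
    (S a * Ss a) * (S b * Ss b) =
      ∑ p ∈ (Λ.minPairs_finite hrf a b).toFinset, S (Λ.comp a p.1) * Ss (Λ.comp a p.1) := by
  rw [mul_assoc, ← mul_assoc (Ss a), cohn_cp3' hrf hS a b, Finset.sum_mul, Finset.mul_sum]
  refine Finset.sum_congr rfl fun p hp => ?_
  have hm := (Set.Finite.mem_toFinset _).1 hp
  obtain ⟨q1, q2, q3, q4⟩ := hm
  rw [mul_assoc (S p.1), ← mul_assoc (S a), hS.mul_comp _ _ q1, hS.ghost_mul_comp _ _ q2,
    ← q3]

lemma cohn_P_comm (hrf : Λ.RowFinite) (hS : IsCohnFamily Λ A S Ss) (a b : Λ.Path) :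
    (S a * Ss a) * (S b * Ss b) = (S b * Ss b) * (S a * Ss a) := by
  rw [cohn_P_mul hrf hS a b, cohn_P_mul hrf hS b a]
  refine Finset.sum_nbij' (fun p => p.swap) (fun p => p.swap) ?_ ?_ ?_ ?_ ?_
  · intro p hp
    exact (Set.Finite.mem_toFinset _).2 (Λ.mem_minPairs_symm ((Set.Finite.mem_toFinset _).1 hp))
  · intro p hp
    exact (Set.Finite.mem_toFinset _).2 (Λ.mem_minPairs_symm ((Set.Finite.mem_toFinset _).1 hp))
  · intro p _; exact Prod.swap_swap p
  · intro p _; exact Prod.swap_swap p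
  · intro p hp
    have hm := (Set.Finite.mem_toFinset _).1 hp
    have he : Λ.comp a p.1 = Λ.comp b p.swap.1 := hm.2.2.1
    rw [he]

lemma cohn_P_orth (hS : IsCohnFamily Λ A S Ss) {a b : Λ.Path} (hd : Λ.deg a = Λ.deg b)
    (hne : a ≠ b) : (S a * Ss a) * (S b * Ss b) = 0 := by
  have h0 : Ss a * S b = 0 := by
    rw [hS.cp3, Λ.minPairs_empty_of_same_deg hd hne, finsum_mem_empty]
  rw [mul_assoc, ← mul_assoc (Ss a), h0, zero_mul, mul_zero]

end CohnLemmas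
section CohnQ

variable {k : ℕ} {Λ : KGraph k} {A : Type} [Ring A] {S Ss : Λ.Path → A}

lemma cohn_Sv_P (hS : IsCohnFamily Λ A S Ss) {a w : Λ.Path} (ha : Λ.rng a = w) :
    S w * (S a * Ss a) = S a * Ss a := by
  subst ha; rw [← mul_assoc, cohn_rng_mul hS]

lemma cohn_P_Sv (hS : IsCohnFamily Λ A S Ss) {a w : Λ.Path} (ha : Λ.rng a = w) :
    (S a * Ss a) * S w = S a * Ss a := by
  subst ha; rw [mul_assoc, cohn_Ss_rng hS]

lemma cohn_Q_comm (hrf : Λ.RowFinite) (hS : IsCohnFamily Λ A S Ss) {a b w : Λ.Path}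
    (hw : Λ.IsVertex w) (ha : Λ.rng a = w) (hb : Λ.rng b = w) :
    Commute (S w - S a * Ss a) (S w - S b * Ss b) := by
  show (S w - S a * Ss a) * (S w - S b * Ss b) = (S w - S b * Ss b) * (S w - S a * Ss a)
  rw [sub_mul, sub_mul, mul_sub, mul_sub, mul_sub, mul_sub, hS.vertex_idem w hw,
    cohn_Sv_P hS ha, cohn_Sv_P hS hb, cohn_P_Sv hS ha, cohn_P_Sv hS hb, cohn_P_comm hrf hS a b]
  abel

lemma cohn_Q_idem (hS : IsCohnFamily Λ A S Ss) {a w : Λ.Path}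
    (hw : Λ.IsVertex w) (ha : Λ.rng a = w) :
    (S w - S a * Ss a) * (S w - S a * Ss a) = S w - S a * Ss a := by
  rw [sub_mul, mul_sub, mul_sub, hS.vertex_idem w hw, cohn_Sv_P hS ha, cohn_P_Sv hS ha,
    cohn_P_idem hS]
  abel

end CohnQ

section MainAux

variable {k : ℕ} {Λ : KGraph k}

/-- Ranges of elements of the extension set. -/
lemma ext_rng (hrf : Λ.RowFinite) [DecidableEq Λ.Path] {E : Finset Λ.Path} {f : Λ.Path} :
    ∀ ν ∈ E.biUnion fun l => (Λ.minPairs_finite hrf l f).toFinset.image Prod.snd,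
      Λ.rng ν = Λ.src f := by
  intro ν hν
  obtain ⟨l, _, hνl⟩ := Finset.mem_biUnion.1 hν
  obtain ⟨p, hp, rfl⟩ := Finset.mem_image.1 hνl
  exact ((Set.Finite.mem_toFinset _).1 hp).2.1.symm

/-- Degrees of elements of the extension set. -/
lemma ext_deg (hrf : Λ.RowFinite) [DecidableEq Λ.Path] {E : Finset Λ.Path} {f : Λ.Path} :
    ∀ ν ∈ E.biUnion fun l => (Λ.minPairs_finite hrf l f).toFinset.image Prod.snd,
      ∃ l ∈ E, Λ.deg f + Λ.deg ν = Λ.deg l ⊔ Λ.deg f := by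
  intro ν hν
  obtain ⟨l, hl, hνl⟩ := Finset.mem_biUnion.1 hν
  obtain ⟨p, hp, rfl⟩ := Finset.mem_image.1 hνl
  have hm := (Set.Finite.mem_toFinset _).1 hp
  obtain ⟨m1, m2, m3, m4⟩ := hm
  refine ⟨l, hl, ?_⟩
  rw [← Λ.deg_comp f p.2 m2, ← m3, m4.1]

/-- The extension set is exhaustive at `src f`. -/
lemma ext_exhaustive (hrf : Λ.RowFinite) [DecidableEq Λ.Path] {v : Λ.Path}
    {E : Finset Λ.Path} (hex : Λ.IsExhaustive v ↑E) {f : Λ.Path} (hfr : Λ.rng f = v) :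
    Λ.IsExhaustive (Λ.src f)
      ↑(E.biUnion fun l => (Λ.minPairs_finite hrf l f).toFinset.image Prod.snd) := by
  intro a ha
  have haw : Λ.src f = Λ.rng a := ha.symm
  have hfar : Λ.rng (Λ.comp f a) = v := by rw [Λ.rng_comp _ _ haw, hfr]
  obtain ⟨l, hl, ⟨⟨α, β⟩, hαβ⟩⟩ := hex (Λ.comp f a) hfar
  obtain ⟨m1, m2, m3, m4⟩ := hαβ
  have hsa : Λ.src a = Λ.rng α := by rw [← Λ.src_comp _ _ haw]; exact m1
  have hcommon : Λ.comp f (Λ.comp a α) = Λ.comp l β := by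
    rw [← Λ.comp_assoc _ _ _ haw hsa]; exact m3
  have hsaα : Λ.src f = Λ.rng (Λ.comp a α) := by rw [Λ.rng_comp _ _ hsa]; exact haw
  obtain ⟨ν, γ, t2, hνγ, hνt2, hxeq⟩ := Λ.exists_minPair_of_common hsaα m2 hcommon
  have hsym : (γ, ν) ∈ Λ.MinPairs l f := Λ.mem_minPairs_symm hνγ
  refine ⟨ν, ?_, Λ.minPairs_nonempty_of_common hsa hνt2 hxeq⟩
  exact Finset.mem_coe.2 (Finset.mem_biUnion.2 ⟨l, hl, Finset.mem_image.2
    ⟨(γ, ν), (Set.Finite.mem_toFinset _).2 hsym, rfl⟩⟩)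

/-- The measure strictly decreases when passing to the extension set. -/
lemma ext_measure (hrf : Λ.RowFinite) [DecidableEq Λ.Path]
    {E : Finset Λ.Path} {f : Λ.Path} {i0 : Fin k} (hfdeg : Λ.deg f = Pi.single i0 1)
    {l₀ : Λ.Path} (hl₀ : l₀ ∈ E) (hl₀d : 1 ≤ Λ.deg l₀ i0) :
    (∑ i, (E.biUnion fun l => (Λ.minPairs_finite hrf l f).toFinset.image Prod.snd).sup
      (fun x => Λ.deg x i)) < ∑ i, E.sup fun l => Λ.deg l i := by
  have hBge : 1 ≤ E.sup fun l => Λ.deg l i0 := le_trans hl₀d (Finset.le_sup (f := fun l => Λ.deg l i0) hl₀)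
  have hless : ∀ j, (E.biUnion fun l =>
      (Λ.minPairs_finite hrf l f).toFinset.image Prod.snd).sup (fun x => Λ.deg x j) ≤
      E.sup fun l => Λ.deg l j := by
    intro j
    refine Finset.sup_le fun ν hν => ?_
    obtain ⟨l, hl, hd⟩ := ext_deg hrf ν hν
    have hdj := congrFun hd j
    have hlj : Λ.deg l j ≤ E.sup fun l => Λ.deg l j := Finset.le_sup (f := fun l => Λ.deg l j) hl
    simp only [Pi.add_apply, Pi.sup_apply] at hdj
    omega
  have hstrict : (E.biUnion fun l =>
      (Λ.minPairs_finite hrf l f).toFinset.image Prod.snd).sup (fun x => Λ.deg x i0) <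
      E.sup fun l => Λ.deg l i0 := by
    have hsup_le : (E.biUnion fun l =>
        (Λ.minPairs_finite hrf l f).toFinset.image Prod.snd).sup (fun x => Λ.deg x i0) ≤
        (E.sup fun l => Λ.deg l i0) - 1 := by
      refine Finset.sup_le fun ν hν => ?_
      obtain ⟨l, hl, hd⟩ := ext_deg hrf ν hν
      have hdj := congrFun hd i0
      have hsingle := congrFun hfdeg i0
      have hlj : Λ.deg l i0 ≤ E.sup fun l => Λ.deg l i0 := Finset.le_sup (f := fun l => Λ.deg l i0) hl
      simp only [Pi.add_apply, Pi.sup_apply, Pi.single_eq_same] at hdj hsingle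
      rw [hsingle] at hdj
      omega
    omega
  exact Finset.sum_lt_sum (fun j _ => hless j) ⟨i0, Finset.mem_univ _, hstrict⟩

/-- The key algebraic transfer identity. -/
lemma key_transfer (hrf : Λ.RowFinite) {A : Type} [Ring A]
    {S Ss : Λ.Path → A} (hS : IsCohnFamily Λ A S Ss) [DecidableEq Λ.Path]
    {v : Λ.Path} {E : Finset Λ.Path} (hEne : E.Nonempty) (hrng : ∀ a ∈ E, Λ.rng a = v)
    {f : Λ.Path} (hfr : Λ.rng f = v) :
    listProd E (fun a => S v - S a * Ss a) * S f =
      S f * listProd (E.biUnion fun l => (Λ.minPairs_finite hrf l f).toFinset.image Prod.snd)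
        (fun a => S (Λ.src f) - S a * Ss a) := by
  have hwv : Λ.IsVertex (Λ.src f) := Λ.deg_src f
  set U : Finset Λ.Path :=
    E.biUnion fun l => (Λ.minPairs_finite hrf l f).toFinset.image Prod.snd with hU
  have hUrng : ∀ ν ∈ U, Λ.rng ν = Λ.src f := ext_rng hrf
  have hcommU : ∀ a ∈ U, ∀ b ∈ U,
      Commute (S (Λ.src f) - S a * Ss a) (S (Λ.src f) - S b * Ss b) :=
    fun a ha b hb => cohn_Q_comm hrf hS hwv (hUrng a ha) (hUrng b hb)
  have hidemU : ∀ a ∈ U, (S (Λ.src f) - S a * Ss a) * (S (Λ.src f) - S a * Ss a) =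
      S (Λ.src f) - S a * Ss a := fun a ha => cohn_Q_idem hS hwv (hUrng a ha)
  -- the intermediate functions
  set R : Λ.Path → A := fun l =>
    S (Λ.src f) - ∑ ν ∈ (Λ.minPairs_finite hrf l f).toFinset.image Prod.snd, S ν * Ss ν
    with hR
  set R' : Λ.Path → A := fun l =>
    listProd ((Λ.minPairs_finite hrf l f).toFinset.image Prod.snd)
      (fun a => S (Λ.src f) - S a * Ss a) with hR'
  -- ranges and degrees of elements of extF l, for l ∈ E
  have hextF_rng : ∀ l, ∀ ν ∈ (Λ.minPairs_finite hrf l f).toFinset.image Prod.snd,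
      Λ.rng ν = Λ.src f := by
    intro l ν hν
    obtain ⟨p, hp, rfl⟩ := Finset.mem_image.1 hν
    exact ((Set.Finite.mem_toFinset _).1 hp).2.1.symm
  have hextF_deg : ∀ l, ∀ ν ∈ (Λ.minPairs_finite hrf l f).toFinset.image Prod.snd,
      Λ.deg f + Λ.deg ν = Λ.deg l ⊔ Λ.deg f := by
    intro l ν hν
    obtain ⟨p, hp, rfl⟩ := Finset.mem_image.1 hν
    obtain ⟨m1, m2, m3, m4⟩ := (Set.Finite.mem_toFinset _).1 hp
    rw [← Λ.deg_comp f p.2 m2, ← m3, m4.1]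
  have horthF : ∀ l, ∀ a ∈ (Λ.minPairs_finite hrf l f).toFinset.image Prod.snd,
      ∀ b ∈ (Λ.minPairs_finite hrf l f).toFinset.image Prod.snd, a ≠ b →
      (S a * Ss a) * (S b * Ss b) = 0 := by
    intro l a ha b hb hab
    refine cohn_P_orth hS ?_ hab
    have h1 := hextF_deg l a ha
    have h2 := hextF_deg l b hb
    rw [← h2] at h1
    exact add_left_cancel h1
  -- step A : transfer across one factor
  have hstepA : ∀ l ∈ E, (S v - S l * Ss l) * S f = S f * R l := by
    intro l hl
    have hinj : ∀ p ∈ (Λ.minPairs_finite hrf l f).toFinset,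
        ∀ q ∈ (Λ.minPairs_finite hrf l f).toFinset, p.2 = q.2 → p = q := by
      intro p hp q hq hpq
      have hpm := (Set.Finite.mem_toFinset _).1 hp
      have hqm := (Set.Finite.mem_toFinset _).1 hq
      have he : Λ.comp l p.1 = Λ.comp l q.1 := by
        rw [hpm.2.2.1, hqm.2.2.1, hpq]
      exact Prod.ext ((Λ.comp_inj hpm.1 hqm.1 rfl he).2) hpq
    have hP : (S l * Ss l) * S f = S f * ∑ ν ∈
        (Λ.minPairs_finite hrf l f).toFinset.image Prod.snd, S ν * Ss ν := by
      rw [mul_assoc, cohn_cp3' hrf hS l f, Finset.mul_sum, Finset.sum_image hinj,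
        Finset.mul_sum]
      refine Finset.sum_congr rfl fun p hp => ?_
      have hpm := (Set.Finite.mem_toFinset _).1 hp
      rw [← mul_assoc, hS.mul_comp _ _ hpm.1, hpm.2.2.1, ← hS.mul_comp _ _ hpm.2.1, mul_assoc]
    rw [sub_mul, hP, hR, mul_sub]
    congr 1
    rw [← hfr, cohn_rng_mul hS, cohn_mul_src hS]
  -- R l = S w * R' l and R l * S w = R l
  have hRprops : ∀ l ∈ E, R l * S (Λ.src f) = R l ∧ R l = S (Λ.src f) * R' l := by
    intro l hl
    constructor
    · rw [hR]
      simp only []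
      rw [sub_mul, hS.vertex_idem _ hwv, Finset.sum_mul]
      congr 1
      exact Finset.sum_congr rfl fun ν hν => cohn_P_Sv hS (hextF_rng l ν hν)
    · rcases Finset.eq_empty_or_nonempty
        ((Λ.minPairs_finite hrf l f).toFinset.image Prod.snd) with hemp | hne
      · rw [hR, hR']
        simp only []
        rw [hemp, listProd_empty, Finset.sum_empty, sub_zero, mul_one]
      · have hform : R' l = S (Λ.src f) - ∑ ν ∈
            (Λ.minPairs_finite hrf l f).toFinset.image Prod.snd, S ν * Ss ν := by
          rw [hR']
          exact listProd_sub_sum hne (hS.vertex_idem _ hwv)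
            (fun a ha => cohn_Sv_P hS (hextF_rng l a ha))
            (fun a ha => cohn_P_Sv hS (hextF_rng l a ha))
            (horthF l)
        rw [hform, hR]
        simp only []
        rw [mul_sub, hS.vertex_idem _ hwv, Finset.mul_sum]
        congr 1
        exact (Finset.sum_congr rfl fun ν hν => cohn_Sv_P hS (hextF_rng l ν hν)).symm
  -- assemble
  have h1 : listProd E (fun a => S v - S a * Ss a) * S f = S f * listProd E R :=
    listProd_transfer hstepA
  have h2 : listProd E R = S (Λ.src f) * listProd E R' := by
    refine list_pull_idem (S (Λ.src f)) E.toList R R' ?_ ?_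
    · simp only [ne_eq, Finset.toList_eq_nil]
      intro he
      rw [he] at hEne
      exact absurd hEne (by simp)
    · intro l hl
      exact hRprops l (Finset.mem_toList.1 hl)
  have h3 : listProd E R' = listProd U (fun a => S (Λ.src f) - S a * Ss a) := by
    rw [hR']
    exact listProd_biUnion hcommU hidemU E _ fun l hl x hx => Finset.mem_biUnion.2 ⟨l, hl, hx⟩
  rw [h1, h2, h3, ← mul_assoc, cohn_mul_src hS]

end MainAux
/-- The main induction: the edge relations imply the relations for all finite
exhaustive sets. -/
lemma kp_of_edges {k : ℕ} {Λ : KGraph k} (hrf : Λ.RowFinite) {A : Type} [Ring A]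
    {S Ss : Λ.Path → A} (hS : IsCohnFamily Λ A S Ss)
    (hedge : ∀ v, Λ.IsVertex v → ∀ E : Finset Λ.Path, (↑E ⊆ Λ.edgesAt v) →
        Λ.IsExhaustive v ↑E → listProd E (fun e => S v - S e * Ss e) = 0) :
    ∀ (n : ℕ) (v : Λ.Path), Λ.IsVertex v → ∀ E : Finset Λ.Path, (∀ a ∈ E, Λ.rng a = v) →
      Λ.IsExhaustive v ↑E → (∑ i, E.sup fun l => Λ.deg l i) ≤ n →
      listProd E (fun a => S v - S a * Ss a) = 0 := by
  classical
  intro n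
  induction n using Nat.strong_induction_on with
  | _ n ih =>
  intro v hv E hrng hex hmeas
  have hEne : E.Nonempty := by
    obtain ⟨μ, hμ, -⟩ := hex v (Λ.rng_of_vertex hv)
    exact ⟨μ, hμ⟩
  by_cases hz : ∃ l ∈ E, Λ.deg l = 0
  · obtain ⟨l, hl, hld⟩ := hz
    refine listProd_eq_zero hl ?_
    rw [Λ.eq_of_vertex_rng hld (hrng l hl), hS.ghost_vertex v hv, hS.vertex_idem v hv, sub_self]
  push_neg at hz
  have hknon : Nonempty (Fin k) := by
    obtain ⟨l1, hl1⟩ := hEne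
    by_contra hk
    exact hz l1 hl1 (funext fun i => absurd ⟨i⟩ hk)
  have hfac : ∀ l ∈ E, ∃ e r, ∃ i : Fin k, Λ.src e = Λ.rng r ∧ Λ.comp e r = l ∧
      Λ.deg e = Pi.single i 1 ∧ 1 ≤ Λ.deg l i := by
    intro l hl
    have hne : ∃ i, Λ.deg l i ≠ 0 := by
      by_contra hc
      push_neg at hc
      exact hz l hl (funext fun i => hc i)
    obtain ⟨i, hi⟩ := hne
    have hsplit : Λ.deg l = Pi.single i 1 + (Λ.deg l - Pi.single i 1) := by
      funext j
      by_cases hj : j = i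
      · subst hj; simp only [Pi.add_apply, Pi.sub_apply, Pi.single_eq_same]; omega
      · simp only [Pi.add_apply, Pi.sub_apply, Pi.single_apply, if_neg hj]
        omega
    obtain ⟨⟨e, r⟩, ⟨h1, h2, h3, h4⟩, -⟩ := Λ.factor l _ _ hsplit
    exact ⟨e, r, i, h1, h2, h3, by omega⟩
  choose! ed rd dir hc1 hc2 hc3 hc4 using hfac
  have hfr : ∀ l ∈ E, Λ.rng (ed l) = v := by
    intro l hl
    rw [← hrng l hl]
    conv_rhs => rw [← hc2 l hl]
    rw [Λ.rng_comp _ _ (hc1 l hl)]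
  have hFsub : ↑(E.image ed) ⊆ Λ.edgesAt v := by
    intro f hf
    obtain ⟨l, hl, rfl⟩ := Finset.mem_image.1 hf
    exact ⟨hfr l hl, dir l, hc3 l hl⟩
  have hFex : Λ.IsExhaustive v ↑(E.image ed) := by
    intro a ha
    obtain ⟨l, hl, ⟨⟨ν, γ⟩, hνγ⟩⟩ := hex a ha
    have hlE : l ∈ E := hl
    obtain ⟨q1, q2, q3, q4⟩ := hνγ
    have hsrγ : Λ.src (rd l) = Λ.rng γ := by
      rw [← Λ.src_comp _ _ (hc1 l hlE), hc2 l hlE]; exact q2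
    have hca : Λ.comp a ν = Λ.comp (ed l) (Λ.comp (rd l) γ) := by
      rw [q3]
      conv_lhs => rw [← hc2 l hlE]
      exact Λ.comp_assoc _ _ _ (hc1 l hlE) hsrγ
    have hse : Λ.src (ed l) = Λ.rng (Λ.comp (rd l) γ) := by
      rw [Λ.rng_comp _ _ hsrγ]; exact hc1 l hlE
    exact ⟨ed l, Finset.mem_coe.2 (Finset.mem_image.2 ⟨l, hlE, rfl⟩),
      Λ.minPairs_nonempty_of_common q1 hse hca⟩
  have hQSv : ∀ l ∈ E, (S v - S l * Ss l) * S v = (S v - S l * Ss l) := by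
    intro l hl
    rw [sub_mul, hS.vertex_idem v hv, cohn_P_Sv hS (hrng l hl)]
  have hXSv : listProd E (fun a => S v - S a * Ss a) * S v =
      listProd E (fun a => S v - S a * Ss a) := listProd_mul_right hEne hQSv
  have hkey : ∀ f ∈ E.image ed, listProd E (fun a => S v - S a * Ss a) * (S f * Ss f) = 0 := by
    intro f hf
    obtain ⟨l₀, hl₀, rfl⟩ := Finset.mem_image.1 hf
    have hext0 : listProd
        (E.biUnion fun l => (Λ.minPairs_finite hrf l (ed l₀)).toFinset.image Prod.snd)
        (fun a => S (Λ.src (ed l₀)) - S a * Ss a) = 0 := by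
      refine ih _ (lt_of_lt_of_le (ext_measure hrf (hc3 l₀ hl₀) hl₀ (hc4 l₀ hl₀)) hmeas)
        (Λ.src (ed l₀)) (Λ.deg_src _) _ (ext_rng hrf) (ext_exhaustive hrf hex (hfr l₀ hl₀))
        le_rfl
    rw [← mul_assoc, key_transfer hrf hS hEne hrng (hfr l₀ hl₀), hext0, mul_zero, zero_mul]
  have hFabs : ∀ f ∈ E.image ed,
      listProd E (fun a => S v - S a * Ss a) * (S v - S f * Ss f) =
      listProd E (fun a => S v - S a * Ss a) := by
    intro f hf
    rw [mul_sub, hXSv, hkey f hf, sub_zero]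
  have hX0 : listProd E (fun a => S v - S a * Ss a) *
      listProd (E.image ed) (fun f => S v - S f * Ss f) =
      listProd E (fun a => S v - S a * Ss a) := mul_listProd_absorb hFabs
  rw [hedge v hv (E.image ed) hFsub hFex, mul_zero] at hX0
  exact hX0.symm
/-- Proposition: a Cohn `Λ`-family over a row-finite `k`-graph is a Kumjian–Pask
`Λ`-family (i.e. `∏_{λ∈E}(S_v - S_λ S_{λ*}) = 0` for all vertices `v` and all finite
exhaustive `E ⊆ vΛ`) if and only if `∏_{e∈E}(S_v - S_e S_{e*}) = 0` for all vertices
`v` and all exhaustive sets of edges `E ⊆ vΛ¹`. -/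
theorem kp_family_iff_on_edges {k : ℕ} (Λ : KGraph k) (hrf : Λ.RowFinite)
    (R : Type) [CommRing R] (A : Type) [Ring A] [Algebra R A]
    (S Ss : Λ.Path → A) (hS : IsCohnFamily Λ A S Ss) :
    (∀ v, Λ.IsVertex v → ∀ E : Finset Λ.Path, (∀ a ∈ E, Λ.rng a = v) →
        Λ.IsExhaustive v ↑E →
        listProd E (fun a => S v - S a * Ss a) = 0) ↔
    (∀ v, Λ.IsVertex v → ∀ E : Finset Λ.Path, (↑E ⊆ Λ.edgesAt v) →
        Λ.IsExhaustive v ↑E →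
        listProd E (fun e => S v - S e * Ss e) = 0) := by

  constructor
  · intro h v hv E hsub hex
    exact h v hv E (fun a ha => (hsub ha).1) hex
  · intro h v hv E hrng hex
    exact kp_of_edges hrf hS h _ v hv E hrng hex le_rfl
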